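/- Freiling's axiom is equivalent to the negation of the continuum hypothesis (7.6(8)): The statement AX — for every function f assigning to each real number a countable set of real numbers, there exist reals x and y with x ∉ f(y) and y ∉ f(x) — holds if and only if the continuum hypothesis fails, i.e., if and only if ℵ₁ < 2^{ℵ₀}. -/
import Mathlib

open Cardinal Set

universe u

theorem aleph_one_lt_continuum_univ_iff :
    Cardinal.aleph.{u} 1 < Cardinal.continuum.{u} ↔
      Cardinal.aleph.{0} 1 < Cardinal.continuum.{0} := by
  rw [show Cardinal.aleph.{u} 1 = Cardinal.lift.{u, 0} (Cardinal.aleph.{0} 1) by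
        rw [Cardinal.lift_aleph, Ordinal.lift_one],
      show Cardinal.continuum.{u} = Cardinal.lift.{u, 0} Cardinal.continuum.{0} from
        (Cardinal.lift_continuum.{u, 0}).symm,
      Cardinal.lift_lt]

/-- Freiling's axiom is equivalent to the negation of the continuum hypothesis (7.6(8)):
for every `f : ℝ → Set ℝ` with all values countable there exist reals `x, y` with
`x ∉ f y` and `y ∉ f x`, if and only if `ℵ₁ < 2 ^ ℵ₀`. -/
theorem freiling_axiom_iff_not_CH :
    (∀ f : ℝ → Set ℝ, (∀ x : ℝ, (f x).Countable) →
      ∃ x y : ℝ, x ∉ f y ∧ y ∉ f x) ↔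
    Cardinal.aleph 1 < Cardinal.continuum := by
  rw [aleph_one_lt_continuum_univ_iff]
  constructor
  · -- AX → ¬CH
    intro hax
    by_contra hch
    push_neg at hch
    have heq : Cardinal.aleph 1 = Cardinal.continuum :=
      le_antisymm Cardinal.aleph_one_le_continuum hch
    have hmk : #ℝ = #((Cardinal.aleph 1).ord.ToType) := by
      rw [Cardinal.mk_toType, Cardinal.card_ord, Cardinal.mk_real]
      exact heq.symm
    obtain ⟨e⟩ := Cardinal.eq.1 hmk
    set f : ℝ → Set ℝ := fun x => {y | e y ≤ e x} with hf
    have hcnt : ∀ x : ℝ, (f x).Countable := by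
      intro x
      have h1 : (Set.Iic (e x)).Countable := by
        rw [Cardinal.countable_iff_lt_aleph_one]
        have : Set.Iic (e x) = insert (e x) (Set.Iio (e x)) := by
          ext z; simp [le_iff_lt_or_eq, or_comm]
        rw [this]
        refine lt_of_le_of_lt (Cardinal.mk_insert_le) ?_
        exact Cardinal.add_lt_of_lt Cardinal.aleph0_lt_aleph_one.le
          (Cardinal.mk_Iio_ord_toType (e x))
          (lt_of_le_of_lt Cardinal.one_le_aleph0 Cardinal.aleph0_lt_aleph_one)
      have : f x = e ⁻¹' (Set.Iic (e x)) := rfl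
      rw [this]
      exact h1.preimage e.injective
    obtain ⟨x, y, hxy, hyx⟩ := hax f hcnt
    rcases le_total (e x) (e y) with h | h
    · exact hxy h
    · exact hyx h
  · -- ¬CH → AX
    intro hch f hf
    have hle : Cardinal.aleph 1 ≤ #ℝ := by rw [Cardinal.mk_real]; exact hch.le
    obtain ⟨S, hS⟩ := Cardinal.le_mk_iff_exists_set.1 hle
    have hU : #(⋃ y ∈ S, f y) < #ℝ := by
      refine lt_of_le_of_lt (Cardinal.mk_biUnion_le f S) ?_
      have hsup : ⨆ y : S, #(f (y : ℝ)) ≤ Cardinal.aleph0 :=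
        ciSup_le' fun y => Cardinal.mk_le_aleph0_iff.2 (hf y)
      calc #S * ⨆ y : S, #(f (y : ℝ)) ≤ Cardinal.aleph 1 * Cardinal.aleph0 := by
            exact mul_le_mul' hS.le hsup
        _ = Cardinal.aleph 1 := by
            rw [Cardinal.mul_eq_max Cardinal.aleph0_lt_aleph_one.le le_rfl,
              max_eq_left Cardinal.aleph0_lt_aleph_one.le]
        _ < #ℝ := by rw [Cardinal.mk_real]; exact hch
    have hne : (⋃ y ∈ S, f y) ≠ Set.univ := by
      intro h
      rw [h, Cardinal.mk_univ] at hU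
      exact lt_irrefl _ hU
    obtain ⟨x, hx⟩ := Set.ne_univ_iff_exists_notMem _ |>.1 hne
    have hnsub : ¬ S ⊆ f x := by
      intro hsub
      have : Cardinal.aleph 1 ≤ Cardinal.aleph0 := by
        rw [← hS]
        exact le_trans (Cardinal.mk_le_mk_of_subset hsub) (Cardinal.mk_le_aleph0_iff.2 (hf x))
      exact absurd this (not_le.2 Cardinal.aleph0_lt_aleph_one)
    obtain ⟨y, hyS, hyfx⟩ := Set.not_subset.1 hnsub
    refine ⟨x, y, ?_, hyfx⟩
    intro hxfy
    exact hx (Set.mem_biUnion hyS hxfy)
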